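/- Let A be a unital C*-algebra, E a conditional expectation on A, and K > 0 a real number such that ‖x* x‖ ≤ K·‖E(x* x)‖ for every x ∈ A. Then a* a ≤ K·E(a* a) holds in the order of A for every a ∈ A; in particular the map K·E − id_A is positive. -/

import Mathlib

variable {A : Type*} [CStarAlgebra A] [PartialOrder A] [StarOrderedRing A]

/-- A conditional expectation on a unital C*-algebra `A`: a linear, idempotent, unital,
positive, contractive (norm-one, since `E 1 = 1`) map whose range is a C*-subalgebra
`B = E(A)` (closed under multiplication and star) and which is a `B`-bimodule map. -/
structure IsCondExp (E : A → A) : Prop where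
  map_add : ∀ a b : A, E (a + b) = E a + E b
  map_smul : ∀ (c : ℂ) (a : A), E (c • a) = c • E a
  idem : ∀ a : A, E (E a) = E a
  map_one : E 1 = 1
  pos : ∀ a : A, 0 ≤ a → 0 ≤ E a
  contractive : ∀ a : A, ‖E a‖ ≤ ‖a‖
  range_mul : ∀ a b : A, E (E a * E b) = E a * E b
  range_star : ∀ a : A, E (star (E a)) = star (E a)
  bimod : ∀ a b c : A, E (E b * a * E c) = E b * E a * E c

/-- The complex continuous functional calculus of a normal element lands in the elemental
star algebra generated by that element. -/
lemma cfc_complex_mem_elemental (g : ℂ → ℂ) (a : A) (ha : IsStarNormal a) :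
    cfc g a ∈ StarAlgebra.elemental ℂ a := by
  by_cases h : ContinuousOn g (spectrum ℂ a)
  · rw [cfc_apply g a ha h, cfcHom_eq_of_isStarNormal]
    exact SetLike.coe_mem _
  · rw [cfc_apply_of_not_continuousOn a h]
    exact zero_mem _

/-- A conditional expectation fixes every element of the elemental star algebra generated
by a fixed element. -/
lemma IsCondExp.fixes_elemental {E : A → A} (hE : IsCondExp E) {d x : A} (hd : E d = d)
    (hx : x ∈ StarAlgebra.elemental ℂ d) : E x = x := by
  have hneg : ∀ y : A, E (-y) = -E y := fun y => by
    have := hE.map_smul (-1) y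
    simpa using this
  have hcont : Continuous E := by
    have : LipschitzWith 1 E := by
      refine LipschitzWith.of_dist_le_mul fun x y => ?_
      have h1 : E x - E y = E (x - y) := by
        rw [sub_eq_add_neg, sub_eq_add_neg, hE.map_add, hneg]
      simp only [dist_eq_norm, h1, NNReal.coe_one, one_mul]
      exact hE.contractive _
    exact this.continuous
  induction hx using StarAlgebra.elemental.induction_on with
  | self => exact hd
  | star_self => rw [← hd]; exact hE.range_star d
  | algebraMap r =>
      rw [Algebra.algebraMap_eq_smul_one, hE.map_smul, hE.map_one]
  | add u hu v hv hu' hv' => rw [hE.map_add, hu', hv']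
  | mul u hu v hv hu' hv' =>
      conv_lhs => rw [← hu', ← hv']
      rw [hE.range_mul, hu', hv']
  | closure s hs hfix v hv =>
      have hclosed : IsClosed {u : A | E u = u} := isClosed_eq hcont continuous_id
      have hsub : s ⊆ {u : A | E u = u} := fun u hu => hfix u hu
      exact hclosed.closure_subset_iff.mpr hsub hv

theorem condexp_norm_bound_implies_order_bound
    (E : A → A) (hE : IsCondExp E) (K : ℝ) (hK : 0 < K)
    (hnorm : ∀ x : A, ‖star x * x‖ ≤ K * ‖E (star x * x)‖) :
    (∀ a : A, star a * a ≤ K • E (star a * a)) ∧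
    (∀ a : A, 0 ≤ a → 0 ≤ K • E a - a) := by
  have hsmul_nonneg : ∀ s : ℝ, 0 ≤ s → (0:A) ≤ s • 1 := by
    intro s hs
    have h1 : star (Real.sqrt s • (1:A)) * (Real.sqrt s • 1) = s • 1 := by
      simp [smul_mul_smul_comm, smul_smul, Real.mul_self_sqrt hs]
    rw [← h1]
    exact star_mul_self_nonneg _
  have main : ∀ a : A, star a * a ≤ K • E (star a * a) := by
    intro a
    set c := star a * a with hc_def
    have hc : 0 ≤ c := star_mul_self_nonneg a
    set d := E c with hd_def
    have hd0 : 0 ≤ d := hE.pos c hc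
    have hdsa : IsSelfAdjoint d := .of_nonneg hd0
    have hdfix : E d = d := hE.idem c
    have hspec : ∀ x ∈ spectrum ℝ d, 0 ≤ x := fun x hx =>
      spectrum_nonneg_of_nonneg hd0 hx
    have key : ∀ t : ℝ, 0 < t → c ≤ K • d + (K * t) • 1 := by
      intro t ht
      set g : ℝ → ℝ := fun x => Real.sqrt (max x 0 + t) with hg_def
      have hgpos : ∀ x, 0 < g x := fun x => Real.sqrt_pos.mpr (by positivity)
      set f : ℝ → ℝ := fun x => (g x)⁻¹ with hf_def
      have hgc : Continuous g := by
        apply Real.continuous_sqrt.comp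
        fun_prop
      have hfc : Continuous f := hgc.inv₀ fun x => (hgpos x).ne'
      set r := cfc f d with hr_def
      set u := cfc g d with hu_def
      have hrsa : IsSelfAdjoint r := cfc_predicate f d
      have husa : IsSelfAdjoint u := cfc_predicate g d
      have hur : u * r = 1 := by
        rw [hu_def, hr_def, ← cfc_mul g f d hgc.continuousOn hfc.continuousOn]
        have h1 : (fun x => g x * f x) = fun _ => (1:ℝ) :=
          funext fun x => mul_inv_cancel₀ (hgpos x).ne'
        rw [h1, cfc_const 1 d, map_one]
      have hru : r * u = 1 := by
        rw [hu_def, hr_def, ← cfc_mul f g d hfc.continuousOn hgc.continuousOn]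
        have h1 : (fun x => f x * g x) = fun _ => (1:ℝ) :=
          funext fun x => inv_mul_cancel₀ (hgpos x).ne'
        rw [h1, cfc_const 1 d, map_one]
      have huu : u * u = d + t • 1 := by
        rw [hu_def, ← cfc_mul g g d hgc.continuousOn hgc.continuousOn]
        have h1 : cfc (fun x => g x * g x) d = cfc (fun x : ℝ => x + t) d := by
          apply cfc_congr
          intro x hx
          have hx0 := hspec x hx
          simp only [hg_def, max_eq_left hx0]
          exact Real.mul_self_sqrt (by positivity)
        rw [h1, cfc_add d (fun x : ℝ => x) (fun _ => t) continuousOn_id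
          continuousOn_const, cfc_id' ℝ d, cfc_const t d, Algebra.algebraMap_eq_smul_one]
      have hrfix : E r = r := by
        refine hE.fixes_elemental hdfix ?_
        rw [hr_def, cfc_real_eq_complex f hdsa]
        exact cfc_complex_mem_elemental _ d hdsa.isStarNormal
      have hbimod : E (r * c * r) = r * d * r := by
        have h1 := hE.bimod c r r
        rw [hrfix] at h1
        rw [h1, ← hd_def]
      have hrdr : r * d * r = cfc (fun x => f x * x * f x) d := by
        rw [hr_def]
        calc cfc f d * d * cfc f d
            = cfc f d * cfc (fun x : ℝ => x) d * cfc f d := by rw [cfc_id' ℝ d]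
          _ = cfc (fun x => f x * x) d * cfc f d := by
              rw [cfc_mul f (fun x : ℝ => x) d hfc.continuousOn continuous_id.continuousOn]
          _ = cfc (fun x => f x * x * f x) d := by
              rw [← cfc_mul (fun x => f x * x) f d ((hfc.mul continuous_id).continuousOn) hfc.continuousOn]
      have hrdr_le : r * d * r ≤ 1 := by
        rw [hrdr]
        apply cfc_le_one
        intro x hx
        have hx0 := hspec x hx
        simp only [hf_def, hg_def, max_eq_left hx0]
        have hxt : (0:ℝ) < x + t := by positivity
        set sq := Real.sqrt (x + t) with hsqdef
        have hsq : sq * sq = x + t := Real.mul_self_sqrt hxt.le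
        have hsq0 : 0 < sq := Real.sqrt_pos.mpr hxt
        have h1 : sq⁻¹ * x * sq⁻¹ = x / (x + t) := by
          rw [← hsq]
          field_simp
        rw [h1]
        exact (div_le_one hxt).mpr (by linarith)
      have hrdr0 : 0 ≤ r * d * r := by
        have h1 := star_left_conjugate_nonneg hd0 r
        rwa [hrsa.star_eq] at h1
      have hnorm_rdr : ‖r * d * r‖ ≤ 1 :=
        (CStarAlgebra.norm_le_one_iff_of_nonneg _ hrdr0).mpr hrdr_le
      have hrcr0 : 0 ≤ r * c * r := by
        have h1 := star_left_conjugate_nonneg hc r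
        rwa [hrsa.star_eq] at h1
      have hsq_sa : star (CFC.sqrt c) = CFC.sqrt c :=
        (IsSelfAdjoint.of_nonneg (CFC.sqrt_nonneg c)).star_eq
      have hsqrt : star (CFC.sqrt c * r) * (CFC.sqrt c * r) = r * c * r := by
        rw [star_mul, hrsa.star_eq, hsq_sa]
        rw [mul_assoc, ← mul_assoc (CFC.sqrt c), CFC.sqrt_mul_sqrt_self c hc, ← mul_assoc]
      have hKnorm : ‖r * c * r‖ ≤ K := by
        calc ‖r * c * r‖ ≤ K * ‖E (r * c * r)‖ := by
              rw [← hsqrt]; exact hnorm _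
          _ = K * ‖r * d * r‖ := by rw [hbimod]
          _ ≤ K * 1 := mul_le_mul_of_nonneg_left hnorm_rdr hK.le
          _ = K := mul_one K
      have hrcr_le : r * c * r ≤ K • 1 := by
        calc r * c * r ≤ algebraMap ℝ A ‖r * c * r‖ :=
              IsSelfAdjoint.le_algebraMap_norm_self (IsSelfAdjoint.of_nonneg hrcr0)
          _ ≤ K • 1 := by
              rw [Algebra.algebraMap_eq_smul_one, ← sub_nonneg, ← sub_smul]
              exact hsmul_nonneg _ (by linarith)
      have hconj : c = u * (r * c * r) * u := by
        have h1 : u * (r * c * r) * u = (u * r) * c * (r * u) := by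
          simp only [mul_assoc]
        rw [h1, hur, hru, one_mul, mul_one]
      have h2 : u * (r * c * r) * u ≤ u * (K • 1) * u := by
        have h3 := star_left_conjugate_le_conjugate hrcr_le u
        rwa [husa.star_eq] at h3
      have h4 : u * (K • 1) * u = K • (d + t • 1) := by
        rw [mul_smul_comm, smul_mul_assoc, mul_one, huu]
      calc c = u * (r * c * r) * u := hconj
        _ ≤ u * (K • 1) * u := h2
        _ = K • (d + t • 1) := h4
        _ = K • d + (K * t) • 1 := by rw [smul_add, smul_smul]
    have htend : Filter.Tendsto (fun t : ℝ => K • d + (K * t) • 1 - c)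
        (nhdsWithin 0 (Set.Ioi 0)) (nhds (K • d - c)) := by
      have hcont : Continuous fun t : ℝ => K • d + (K * t) • 1 - c := by
        apply Continuous.sub ?_ continuous_const
        exact continuous_const.add ((continuous_const.mul continuous_id).smul continuous_const)
      have h0 : K • d + (K * 0) • (1:A) - c = K • d - c := by simp
      exact h0 ▸ (hcont.tendsto 0).mono_left nhdsWithin_le_nhds
    have hlim : 0 ≤ K • d - c := by
      refine ge_of_tendsto htend ?_
      filter_upwards [self_mem_nhdsWithin] with t ht
      rw [sub_nonneg]
      exact key t ht
    rw [← sub_nonneg]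
    exact hlim
  refine ⟨main, fun a ha => ?_⟩
  have h1 : star (CFC.sqrt a) * CFC.sqrt a = a := by
    rw [(IsSelfAdjoint.of_nonneg (CFC.sqrt_nonneg a)).star_eq, CFC.sqrt_mul_sqrt_self a ha]
  have h2 := main (CFC.sqrt a)
  rw [h1] at h2
  exact sub_nonneg.mpr h2
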